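/- Let k, l ≥ 1 and P(x,y) = x^{2k}(x−1)^{2l} + y². Suppose f₁, h₁, f₂, h₂ are real polynomials in two variables with f₁ coprime to h₁ and f₂ coprime to h₂, the rational functions f₁/h₁ and f₂/h₂ are defined on ℝ²∖{(0,0)} and ℝ²∖{(1,0)} respectively (i.e., h₁ has no zeros outside (0,0) and h₂ none outside (1,0)), and P·f₁·h₂ = f₂·h₁ as polynomials. Then there exists a nonzero real number λ with f₂ = λ·P·f₁ and h₁ = λ^{-1}·h₂. -/
import Mathlib


open MvPolynomial

noncomputable def myEquiv : MvPolynomial (Fin 2) ℝ ≃ₐ[ℝ] Polynomial (Polynomial ℝ) :=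
  (MvPolynomial.renameEquiv ℝ (Equiv.swap (0 : Fin 2) 1)).trans
    ((MvPolynomial.finSuccEquiv ℝ 1).trans
      (Polynomial.mapAlgEquiv
        ((MvPolynomial.finSuccEquiv ℝ 0).trans
          (Polynomial.mapAlgEquiv (MvPolynomial.isEmptyAlgEquiv ℝ (Fin 0))))))

lemma myEquiv_X0 : myEquiv (X 0) = Polynomial.C Polynomial.X := by
  have h1 : ((1 : Fin 2)) = Fin.succ 0 := rfl
  rw [myEquiv]
  simp only [AlgEquiv.trans_apply, MvPolynomial.renameEquiv_apply, MvPolynomial.rename_X,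
    Equiv.swap_apply_left, h1, MvPolynomial.finSuccEquiv_X_succ, Polynomial.coe_mapAlgEquiv,
    Polynomial.map_C, MvPolynomial.finSuccEquiv_X_zero, Polynomial.map_X, RingHom.coe_coe]

lemma myEquiv_X1 : myEquiv (X 1) = Polynomial.X := by
  rw [myEquiv]
  simp only [AlgEquiv.trans_apply, MvPolynomial.renameEquiv_apply, MvPolynomial.rename_X,
    Equiv.swap_apply_right, MvPolynomial.finSuccEquiv_X_zero, Polynomial.coe_mapAlgEquiv,
    Polynomial.map_X]

lemma not_sq (k l : ℕ) (hk : 1 ≤ k) (hl : 1 ≤ l) (b : RatFunc ℝ) :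
    b ^ 2 ≠ -(algebraMap (Polynomial ℝ) (RatFunc ℝ)
      (Polynomial.X ^ (2 * k) * (Polynomial.X - 1) ^ (2 * l))) := by
  set c : Polynomial ℝ := Polynomial.X ^ (2 * k) * (Polynomial.X - 1) ^ (2 * l) with hc
  have hcmonic : c.Monic := by
    have : (Polynomial.X - 1 : Polynomial ℝ) = Polynomial.X - Polynomial.C 1 := by
      rw [Polynomial.C_1]
    rw [hc, this]
    exact (Polynomial.monic_X_pow _).mul ((Polynomial.monic_X_sub_C (1:ℝ)).pow _)
  intro hb
  set A := algebraMap (Polynomial ℝ) (RatFunc ℝ) with hA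
  have hd : A b.denom ≠ 0 := fun h =>
    RatFunc.denom_ne_zero b ((map_eq_zero_iff A (IsFractionRing.injective _ _)).mp h)
  have hnum : A b.num = b * A b.denom := by
    have h0 := RatFunc.num_div_denom b
    rw [div_eq_iff hd] at h0
    exact h0
  have key : A (b.num ^ 2) = A (-(c * b.denom ^ 2)) := by
    simp only [hc, map_pow, map_neg, map_mul, mul_pow, hnum, hb]
    ring
  have key2 : b.num ^ 2 = -(c * b.denom ^ 2) := IsFractionRing.injective (Polynomial ℝ) _ key
  have := congrArg Polynomial.leadingCoeff key2
  rw [Polynomial.leadingCoeff_pow, Polynomial.leadingCoeff_neg, Polynomial.leadingCoeff_mul,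
    Polynomial.leadingCoeff_pow, hcmonic.leadingCoeff, one_mul] at this
  have hdne : b.denom.leadingCoeff ≠ 0 :=
    Polynomial.leadingCoeff_ne_zero.mpr (RatFunc.denom_ne_zero b)
  have h1 : (0:ℝ) < b.denom.leadingCoeff ^ 2 := by positivity
  nlinarith [sq_nonneg b.num.leadingCoeff]

lemma irrQ (k l : ℕ) (hk : 1 ≤ k) (hl : 1 ≤ l) :
    Irreducible (Polynomial.X ^ 2 + Polynomial.C
      (Polynomial.X ^ (2 * k) * (Polynomial.X - 1) ^ (2 * l) : Polynomial ℝ)) := by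
  set c : Polynomial ℝ := Polynomial.X ^ (2 * k) * (Polynomial.X - 1) ^ (2 * l) with hc
  have hQmonic : (Polynomial.X ^ 2 + Polynomial.C c).Monic :=
    Polynomial.monic_X_pow_add_C _ (by norm_num)
  rw [hQmonic.irreducible_iff_irreducible_map_fraction_map (K := RatFunc ℝ)]
  have hmap : (Polynomial.X ^ 2 + Polynomial.C c).map (algebraMap (Polynomial ℝ) (RatFunc ℝ))
      = Polynomial.X ^ 2 - Polynomial.C (-(algebraMap (Polynomial ℝ) (RatFunc ℝ) c)) := by
    rw [Polynomial.map_add, Polynomial.map_pow, Polynomial.map_X, Polynomial.map_C, map_neg,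
      sub_neg_eq_add]
  rw [hmap]
  exact X_pow_sub_C_irreducible_of_prime Nat.prime_two (not_sq k l hk hl)

lemma irrP (k l : ℕ) (hk : 1 ≤ k) (hl : 1 ≤ l) :
    Irreducible ((X 0) ^ (2 * k) * (X 0 - 1) ^ (2 * l) + (X 1) ^ 2 :
      MvPolynomial (Fin 2) ℝ) := by
  have heP : myEquiv ((X 0) ^ (2 * k) * (X 0 - 1) ^ (2 * l) + (X 1) ^ 2)
      = Polynomial.X ^ 2 + Polynomial.C
        (Polynomial.X ^ (2 * k) * (Polynomial.X - 1) ^ (2 * l) : Polynomial ℝ) := by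
    rw [map_add, map_mul, map_pow, map_pow, map_sub, map_one, map_pow, myEquiv_X0, myEquiv_X1]
    rw [show (1 : Polynomial (Polynomial ℝ)) = Polynomial.C 1 by rw [Polynomial.C_1],
      ← Polynomial.C_sub, ← Polynomial.C_pow, ← Polynomial.C_pow, ← Polynomial.C_mul]
    ring
  exact (MulEquiv.irreducible_iff myEquiv).mp (heP ▸ irrQ k l hk hl)

/-- If `f₁/h₁` and `f₂/h₂` are reduced fractions of polynomials, regular off
`(0,0)` and `(1,0)` respectively, and `P·f₁·h₂ = f₂·h₁` where
`P = x^{2k}(x−1)^{2l} + y²`, then `f₂ = λ·P·f₁` and `h₁ = λ⁻¹·h₂` for some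
nonzero real `λ`. -/
theorem cousin_section_relation (k l : ℕ) (hk : 1 ≤ k) (hl : 1 ≤ l)
    (P f₁ h₁ f₂ h₂ : MvPolynomial (Fin 2) ℝ)
    (hP : P = (X 0) ^ (2 * k) * (X 0 - 1) ^ (2 * l) + (X 1) ^ 2)
    -- `f₁` and `h₁` coprime: no common non-unit factor
    (hcop₁ : ∀ d : MvPolynomial (Fin 2) ℝ, d ∣ f₁ → d ∣ h₁ → IsUnit d)
    (hcop₂ : ∀ d : MvPolynomial (Fin 2) ℝ, d ∣ f₂ → d ∣ h₂ → IsUnit d)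
    -- `h₁` has no zeros outside `(0,0)`, `h₂` none outside `(1,0)`
    (hz₁ : ∀ v : Fin 2 → ℝ, eval v h₁ = 0 → v = ![0, 0])
    (hz₂ : ∀ v : Fin 2 → ℝ, eval v h₂ = 0 → v = ![1, 0])
    (heq : P * f₁ * h₂ = f₂ * h₁) :
    ∃ lam : ℝ, lam ≠ 0 ∧ f₂ = C lam * P * f₁ ∧ h₁ = C lam⁻¹ * h₂ := by
  have hPirr : Irreducible P := by rw [hP]; exact irrP k l hk hl
  have h2ne : h₂ ≠ 0 := by
    intro h
    have := congrFun (hz₂ ![0, 0] (by simp [h])) 0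
    norm_num at this
  have hev : eval ![1, 0] P = 0 := by
    rw [hP]
    simp [zero_pow (show 2 * l ≠ 0 by omega)]
  have hPndvd : ¬ P ∣ h₁ := by
    rintro ⟨t, rfl⟩
    have := congrFun (hz₁ ![1, 0] (by rw [eval_mul, hev, zero_mul])) 0
    norm_num at this
  have hrpP : IsRelPrime h₁ P := by
    intro d hdh hdP
    obtain ⟨t, hPt⟩ := hdP
    rcases hPirr.isUnit_or_isUnit hPt with h | h
    · exact h
    · obtain ⟨u, rfl⟩ := h
      exact absurd (dvd_trans ⟨↑u⁻¹, by rw [hPt, mul_assoc, Units.mul_inv, mul_one]⟩ hdh)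
        hPndvd
  have hrp1 : IsRelPrime h₁ (P * f₁) :=
    hrpP.mul_right (fun d a b => hcop₁ d b a)
  have hd12 : h₁ ∣ h₂ :=
    hrp1.dvd_of_dvd_mul_left (heq.symm ▸ dvd_mul_left h₁ f₂)
  have hd21 : h₂ ∣ h₁ :=
    (show IsRelPrime h₂ f₂ from fun d a b => hcop₂ d b a).dvd_of_dvd_mul_left
      (heq ▸ dvd_mul_left h₂ (P * f₁))
  obtain ⟨u, hu⟩ := associated_of_dvd_dvd hd21 hd12
  obtain ⟨r, hr, hrEq⟩ := Polynomial.isUnit_iff.mp (u.isUnit.map myEquiv)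
  obtain ⟨s, hs, hsEq⟩ := Polynomial.isUnit_iff.mp hr
  have hsne : s ≠ 0 := hs.ne_zero
  have hCs : myEquiv (C s) = Polynomial.C (Polynomial.C s) := by
    have h1 := myEquiv.commutes s
    simpa [MvPolynomial.algebraMap_eq, Polynomial.algebraMap_apply] using h1
  have huC : (u : MvPolynomial (Fin 2) ℝ) = C s := myEquiv.injective (by rw [hCs, hsEq, hrEq])
  have hu' : h₁ = h₂ * C s := by rw [← hu, huC]
  have hcan : P * f₁ = f₂ * C s :=
    mul_right_cancel₀ h2ne (by rw [heq, hu']; ring)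
  refine ⟨s⁻¹, inv_ne_zero hsne, ?_, by rw [inv_inv, hu', mul_comm]⟩
  have hfin : C s⁻¹ * (P * f₁) = f₂ := by
    rw [hcan, mul_comm f₂ (C s), ← mul_assoc, ← MvPolynomial.C_mul,
      inv_mul_cancel₀ hsne, MvPolynomial.C_1, one_mul]
  rw [← hfin, mul_assoc]
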